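/- (Vague convergence of linear functionals) Let X_t be ℝ_+^d-valued random vectors and ν a Radon measure on ℝ_+^d \ {0} such that t·P(X_t ∈ A) → ν(A) for all Borel A bounded away from 0 with ν(∂A) = 0. Let θ_t → θ in ℝ_+^d \ {0}, and suppose ν({z : θᵀz = u}) = 0. Then t·P(θ_tᵀ X_t ≥ u) → ν({z : θᵀz ≥ u}) for every u > 0. -/

import Mathlib

open MeasureTheory Filter

set_option maxHeartbeats 2000000 in
/-- Vague convergence of linear functionals: if t·P(X_t ∈ A) → ν(A) for all
Borel sets A bounded away from 0 with ν(∂A) = 0, ν is finite on sets bounded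
away from 0, θ_t → θ ≠ 0 (nonnegative), and ν({θᵀz = u}) = 0, then
t·P(θ_tᵀX_t ≥ u) → ν({θᵀz ≥ u}) for every u > 0. -/
theorem vague_convergence_linear
    {Ω : Type*} [MeasurableSpace Ω] (μ : Measure Ω) [IsProbabilityMeasure μ]
    (d : ℕ) (X : ℝ → Ω → Fin d → ℝ) (hXm : ∀ t, Measurable (X t))
    (hXpos : ∀ t ω i, 0 ≤ X t ω i)
    (ν : Measure (Fin d → ℝ))
    (hRadon : ∀ r : ℝ, 0 < r → ν {x | r ≤ ‖x‖} < ⊤)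
    (hvague : ∀ A : Set (Fin d → ℝ), MeasurableSet A →
      (∃ r > (0:ℝ), ∀ x ∈ A, r ≤ ‖x‖) → ν (frontier A) = 0 →
      Tendsto (fun t => t * (μ {ω | X t ω ∈ A}).toReal) atTop
        (nhds (ν A).toReal))
    (θt : ℝ → Fin d → ℝ) (θ : Fin d → ℝ)
    (hθt : Tendsto θt atTop (nhds θ))
    (hθ : ∀ i, 0 ≤ θ i) (hθne : θ ≠ 0)
    (u : ℝ) (hu : 0 < u)
    (hnull : ν {z | ∑ i, θ i * z i = u} = 0) :
    Tendsto (fun t => t * (μ {ω | ∑ i, θt t i * X t ω i ≥ u}).toReal) atTop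
      (nhds (ν {z | ∑ i, θ i * z i ≥ u}).toReal) := by
  classical
  simp only [ge_iff_le]
  -- the linear functional
  have hf_cont : Continuous (fun z : Fin d → ℝ => ∑ i, θ i * z i) :=
    continuous_finset_sum _ fun i _ => continuous_const.mul (continuous_apply i)
  set C : ℝ := ∑ i, |θ i| with hC_def
  have hC : 0 < C := by
    obtain ⟨i, hi⟩ := Function.ne_iff.1 hθne
    have h1 : |θ i| ≤ C :=
      Finset.single_le_sum (f := fun i => |θ i|) (fun j _ => abs_nonneg _)
        (Finset.mem_univ i)
    have : 0 < |θ i| := abs_pos.2 hi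
    linarith
  have hbound : ∀ z : Fin d → ℝ, ∑ i, θ i * z i ≤ C * ‖z‖ := by
    intro z
    rw [hC_def, Finset.sum_mul]
    refine Finset.sum_le_sum fun i _ => ?_
    have h1 : θ i * z i ≤ |θ i * z i| := le_abs_self _
    rw [abs_mul] at h1
    have h2 : |z i| ≤ ‖z‖ := by
      have := norm_le_pi_norm z i
      rwa [Real.norm_eq_abs] at this
    exact h1.trans (mul_le_mul_of_nonneg_left h2 (abs_nonneg _))
  have haway : ∀ c : ℝ, 0 < c → ∀ z : Fin d → ℝ,
      c ≤ ∑ i, θ i * z i → c / C ≤ ‖z‖ := by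
    intro c hc z hz
    rw [div_le_iff₀' hC]
    exact hz.trans (hbound z)
  have hfin : ∀ c : ℝ, 0 < c → ν {z | c ≤ ∑ i, θ i * z i} ≠ ⊤ := by
    intro c hc
    refine ne_top_of_le_ne_top (hRadon (c / C) (by positivity)).ne
      (measure_mono fun z hz => haway c hc z hz)
  have hA_meas : ∀ c : ℝ, MeasurableSet {z : Fin d → ℝ | c ≤ ∑ i, θ i * z i} :=
    fun c => (isClosed_le continuous_const hf_cont).measurableSet
  -- hvague specialized to half spaces of the linear functional
  have keyA : ∀ c : ℝ, 0 < c → ν {z | ∑ i, θ i * z i = c} = 0 →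
      Tendsto (fun t => t * (μ {ω | X t ω ∈ {z | c ≤ ∑ i, θ i * z i}}).toReal)
        atTop (nhds (ν {z | c ≤ ∑ i, θ i * z i}).toReal) := by
    intro c hc hcnull
    refine hvague _ (hA_meas c) ⟨c / C, by positivity, fun z hz => haway c hc z hz⟩ ?_
    refine le_antisymm ?_ (zero_le)
    calc ν (frontier {z : Fin d → ℝ | c ≤ ∑ i, θ i * z i})
        ≤ ν {z | ∑ i, θ i * z i = c} :=
          measure_mono fun z hz =>
            (frontier_le_subset_eq continuous_const hf_cont hz).symm
      _ = 0 := hcnull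
  -- countably many bad levels of the linear functional above u/2
  have hlevel_count : Set.Countable
      {c : ℝ | 0 < (ν.restrict {z : Fin d → ℝ | u / (2 * C) ≤ ‖z‖})
        {z | ∑ i, θ i * z i = c}} := by
    haveI : IsFiniteMeasure (ν.restrict {z : Fin d → ℝ | u / (2 * C) ≤ ‖z‖}) := by
      constructor
      rw [Measure.restrict_apply_univ]
      exact hRadon _ (by positivity)
    exact Measure.countable_meas_level_set_pos hf_cont.measurable
  have hlevel : ∀ c : ℝ, u / 2 ≤ c →
      c ∉ {c : ℝ | 0 < (ν.restrict {z : Fin d → ℝ | u / (2 * C) ≤ ‖z‖})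
        {z | ∑ i, θ i * z i = c}} →
      ν {z | ∑ i, θ i * z i = c} = 0 := by
    intro c hc hcbad
    have hsub : {z : Fin d → ℝ | ∑ i, θ i * z i = c}
        ⊆ {z : Fin d → ℝ | u / (2 * C) ≤ ‖z‖} := by
      intro z hz
      have h1 : u / 2 / C ≤ ‖z‖ := by
        have := haway (u / 2) (by positivity) z (by rw [hz]; exact hc)
        -- careful: need u/2 ≤ ∑ ...
        exact this
      simpa [div_div] using h1
    have hmeas : MeasurableSet {z : Fin d → ℝ | ∑ i, θ i * z i = c} :=
      (isClosed_eq hf_cont continuous_const).measurableSet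
    have heq : (ν.restrict {z : Fin d → ℝ | u / (2 * C) ≤ ‖z‖})
        {z | ∑ i, θ i * z i = c} = ν {z | ∑ i, θ i * z i = c} := by
      rw [Measure.restrict_apply hmeas, Set.inter_eq_left.2 hsub]
    rw [Set.mem_setOf_eq, heq] at hcbad
    exact le_antisymm (not_lt.1 hcbad) (zero_le)
  -- abbreviation for the limit
  set L : ℝ := (ν {z : Fin d → ℝ | u ≤ ∑ i, θ i * z i}).toReal with hL_def
  rw [Metric.tendsto_nhds]
  intro ε hε
  have hε5 : 0 < ε / 5 := by linarith
  -- Step: continuity of c ↦ ν(A c) at u, from below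
  have hup : Tendsto (fun n : ℕ =>
      (ν {z : Fin d → ℝ | u - u / (2 * (n + 1)) ≤ ∑ i, θ i * z i}).toReal)
      atTop (nhds L) := by
    have hmono : ∀ n : ℕ, u / 2 ≤ u - u / (2 * ((n : ℝ) + 1)) := by
      intro n
      have hn : (0 : ℝ) ≤ (n : ℝ) := Nat.cast_nonneg _
      have : u / (2 * ((n : ℝ) + 1)) ≤ u / 2 :=
        div_le_div_of_nonneg_left hu.le two_pos (by linarith)
      linarith
    have hanti : Antitone (fun n : ℕ =>
        {z : Fin d → ℝ | u - u / (2 * ((n : ℝ) + 1)) ≤ ∑ i, θ i * z i}) := by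
      intro n m hnm z hz
      have hnm' : (n : ℝ) ≤ m := Nat.cast_le.2 hnm
      have h1 : u / (2 * ((m : ℝ) + 1)) ≤ u / (2 * ((n : ℝ) + 1)) :=
        div_le_div_of_nonneg_left hu.le (by positivity) (by linarith)
      simp only [Set.mem_setOf_eq] at hz ⊢
      linarith
    have hiInter : (⋂ n : ℕ,
        {z : Fin d → ℝ | u - u / (2 * ((n : ℝ) + 1)) ≤ ∑ i, θ i * z i})
        = {z : Fin d → ℝ | u ≤ ∑ i, θ i * z i} := by
      ext z
      simp only [Set.mem_iInter, Set.mem_setOf_eq]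
      constructor
      · intro h
        by_contra hlt
        push_neg at hlt
        obtain ⟨n, hn⟩ := exists_nat_one_div_lt
          (show 0 < (u - ∑ i, θ i * z i) / (u / 2) by
            apply div_pos (by linarith) (by linarith))
        have h2 := h n
        rw [lt_div_iff₀ (by linarith : (0:ℝ) < u / 2)] at hn
        have h3 : u / (2 * ((n : ℝ) + 1)) = 1 / ((n : ℝ) + 1) * (u / 2) := by
          rw [one_div, inv_mul_eq_div, div_div]
        rw [h3] at h2
        linarith
      · intro h n
        have h0 : 0 < u / (2 * ((n : ℝ) + 1)) := by positivity
        linarith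
    have h1 := tendsto_measure_iInter_atTop (μ := ν)
      (s := fun n : ℕ =>
        {z : Fin d → ℝ | u - u / (2 * ((n : ℝ) + 1)) ≤ ∑ i, θ i * z i})
      (fun n => (hA_meas _).nullMeasurableSet) hanti
      ⟨0, hfin _ (lt_of_lt_of_le (by positivity) (hmono 0))⟩
    rw [hiInter] at h1
    have h2 := (ENNReal.tendsto_toReal (hfin u hu)).comp h1
    exact h2
  -- continuity from above (using the null level at u)
  have hgtu : ν {z : Fin d → ℝ | u < ∑ i, θ i * z i}
      = ν {z : Fin d → ℝ | u ≤ ∑ i, θ i * z i} := by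
    have hle1 : ν {z : Fin d → ℝ | u < ∑ i, θ i * z i}
        ≤ ν {z : Fin d → ℝ | u ≤ ∑ i, θ i * z i} := by
      apply measure_mono
      intro z hz
      simp only [Set.mem_setOf_eq] at hz ⊢
      linarith
    refine le_antisymm hle1 ?_
    calc ν {z : Fin d → ℝ | u ≤ ∑ i, θ i * z i}
        ≤ ν ({z : Fin d → ℝ | u < ∑ i, θ i * z i} ∪
            {z : Fin d → ℝ | ∑ i, θ i * z i = u}) := by
          apply measure_mono
          intro z hz
          simp only [Set.mem_setOf_eq] at hz
          rcases lt_or_eq_of_le hz with h | h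
          · exact Or.inl h
          · exact Or.inr h.symm
      _ ≤ ν {z : Fin d → ℝ | u < ∑ i, θ i * z i} +
            ν {z : Fin d → ℝ | ∑ i, θ i * z i = u} := measure_union_le _ _
      _ = ν {z : Fin d → ℝ | u < ∑ i, θ i * z i} := by rw [hnull, add_zero]
  have hdown : Tendsto (fun n : ℕ =>
      (ν {z : Fin d → ℝ | u + 1 / ((n : ℝ) + 1) ≤ ∑ i, θ i * z i}).toReal)
      atTop (nhds L) := by
    have hmono : Monotone (fun n : ℕ =>
        {z : Fin d → ℝ | u + 1 / ((n : ℝ) + 1) ≤ ∑ i, θ i * z i}) := by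
      intro n m hnm z hz
      have hnm' : (n : ℝ) ≤ m := Nat.cast_le.2 hnm
      have h1 : 1 / ((m : ℝ) + 1) ≤ 1 / ((n : ℝ) + 1) :=
        div_le_div_of_nonneg_left one_pos.le (by positivity) (by linarith)
      simp only [Set.mem_setOf_eq] at hz ⊢
      linarith
    have hiUnion : (⋃ n : ℕ,
        {z : Fin d → ℝ | u + 1 / ((n : ℝ) + 1) ≤ ∑ i, θ i * z i})
        = {z : Fin d → ℝ | u < ∑ i, θ i * z i} := by
      ext z
      simp only [Set.mem_iUnion, Set.mem_setOf_eq]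
      constructor
      · rintro ⟨n, hn⟩
        have : 0 < 1 / ((n : ℝ) + 1) := by positivity
        linarith
      · intro h
        obtain ⟨n, hn⟩ := exists_nat_one_div_lt (sub_pos.2 h)
        exact ⟨n, by linarith⟩
    have h1 := tendsto_measure_iUnion_atTop (μ := ν)
      (s := fun n : ℕ =>
        {z : Fin d → ℝ | u + 1 / ((n : ℝ) + 1) ≤ ∑ i, θ i * z i}) hmono
    rw [hiUnion, hgtu] at h1
    exact (ENNReal.tendsto_toReal (hfin u hu)).comp h1
  -- pick n₀ good for both
  obtain ⟨n₀, hn₀up, hn₀down⟩ :=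
    ((hup.eventually_lt_const (show L < L + ε / 5 by linarith)).and
      (hdown.eventually_const_lt (show L - ε / 5 < L by linarith))).exists
  set δ₁ : ℝ := u / (2 * ((n₀ : ℝ) + 1)) with hδ₁_def
  set δ₂ : ℝ := 1 / ((n₀ : ℝ) + 1) with hδ₂_def
  have hδ₁pos : 0 < δ₁ := by positivity
  have hδ₂pos : 0 < δ₂ := by positivity
  have hδ₁le : δ₁ ≤ u / 2 := by
    rw [hδ₁_def]
    have : (0:ℝ) ≤ (n₀ : ℝ) := Nat.cast_nonneg _
    exact div_le_div_of_nonneg_left hu.le two_pos (by linarith)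
  -- choose ε' avoiding bad levels
  have hbadE : Set.Countable
      (((fun e : ℝ => u - e) ⁻¹'
        {c : ℝ | 0 < (ν.restrict {z : Fin d → ℝ | u / (2 * C) ≤ ‖z‖})
          {z | ∑ i, θ i * z i = c}}) ∪
       ((fun e : ℝ => u + e) ⁻¹'
        {c : ℝ | 0 < (ν.restrict {z : Fin d → ℝ | u / (2 * C) ≤ ‖z‖})
          {z | ∑ i, θ i * z i = c}})) :=
    (hlevel_count.preimage (fun a b h => by
        have h' : u - a = u - b := h; linarith)).union
      (hlevel_count.preimage (fun a b h => by
        have h' : u + a = u + b := h; linarith))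
  obtain ⟨ε', hε'mem, hε'bad⟩ : ∃ ε' ∈ Set.Ioo 0 (min δ₁ δ₂), ε' ∉
      (((fun e : ℝ => u - e) ⁻¹'
        {c : ℝ | 0 < (ν.restrict {z : Fin d → ℝ | u / (2 * C) ≤ ‖z‖})
          {z | ∑ i, θ i * z i = c}}) ∪
       ((fun e : ℝ => u + e) ⁻¹'
        {c : ℝ | 0 < (ν.restrict {z : Fin d → ℝ | u / (2 * C) ≤ ‖z‖})
          {z | ∑ i, θ i * z i = c}})) := by
    by_contra hcon
    push_neg at hcon
    have hsub : Set.Ioo (0:ℝ) (min δ₁ δ₂) ⊆ _ := hcon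
    have h1 := measure_mono (μ := volume) hsub
    rw [hbadE.measure_zero, Real.volume_Ioo] at h1
    simp only [nonpos_iff_eq_zero, ENNReal.ofReal_eq_zero] at h1
    have : 0 < min δ₁ δ₂ := lt_min hδ₁pos hδ₂pos
    linarith
  obtain ⟨hε'pos, hε'lt⟩ := hε'mem
  have hε'δ₁ : ε' < δ₁ := hε'lt.trans_le (min_le_left _ _)
  have hε'δ₂ : ε' < δ₂ := hε'lt.trans_le (min_le_right _ _)
  rw [Set.mem_union, not_or] at hε'bad
  have hnull₁ : ν {z : Fin d → ℝ | ∑ i, θ i * z i = u - ε'} = 0 :=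
    hlevel _ (by linarith) hε'bad.1
  have hnull₂ : ν {z : Fin d → ℝ | ∑ i, θ i * z i = u + ε'} = 0 :=
    hlevel _ (by linarith) hε'bad.2
  have hub : (ν {z : Fin d → ℝ | u - ε' ≤ ∑ i, θ i * z i}).toReal < L + ε / 5 := by
    refine lt_of_le_of_lt ?_ hn₀up
    refine ENNReal.toReal_mono (hfin _ (by linarith)) (measure_mono ?_)
    intro z hz
    simp only [Set.mem_setOf_eq] at hz ⊢
    linarith
  have hlb : L - ε / 5 < (ν {z : Fin d → ℝ | u + ε' ≤ ∑ i, θ i * z i}).toReal := by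
    refine lt_of_lt_of_le hn₀down ?_
    refine ENNReal.toReal_mono (hfin _ (by linarith)) (measure_mono ?_)
    intro z hz
    simp only [Set.mem_setOf_eq] at hz ⊢
    linarith
  -- choose the truncation radius R
  have htail : Tendsto (fun n : ℕ => (ν {z : Fin d → ℝ | (n : ℝ) + 1 ≤ ‖z‖}).toReal)
      atTop (nhds 0) := by
    have hanti : Antitone (fun n : ℕ => {z : Fin d → ℝ | (n : ℝ) + 1 ≤ ‖z‖}) := by
      intro n m hnm z hz
      have : (n : ℝ) ≤ m := Nat.cast_le.2 hnm
      simp only [Set.mem_setOf_eq] at hz ⊢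
      linarith
    have hiInter : (⋂ n : ℕ, {z : Fin d → ℝ | (n : ℝ) + 1 ≤ ‖z‖}) = ∅ := by
      ext z
      simp only [Set.mem_iInter, Set.mem_setOf_eq, Set.mem_empty_iff_false,
        iff_false, not_forall, not_le]
      obtain ⟨n, hn⟩ := exists_nat_gt ‖z‖
      exact ⟨n, by linarith⟩
    have h1 := tendsto_measure_iInter_atTop (μ := ν)
      (s := fun n : ℕ => {z : Fin d → ℝ | (n : ℝ) + 1 ≤ ‖z‖})
      (fun n => (isClosed_le continuous_const continuous_norm).measurableSet.nullMeasurableSet)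
      hanti ⟨0, by simpa using (hRadon 1 one_pos).ne⟩
    rw [hiInter] at h1
    have h2 := (ENNReal.tendsto_toReal (by simp : (ν ∅) ≠ ⊤)).comp h1
    simpa [Function.comp_def] using h2
  obtain ⟨m, hm⟩ := (htail.eventually_lt_const hε5).exists
  -- countably many bad radii
  have hsph_count : Set.Countable
      {c : ℝ | 0 < (ν.restrict {z : Fin d → ℝ | (1:ℝ) ≤ ‖z‖}) {z | ‖z‖ = c}} := by
    haveI : IsFiniteMeasure (ν.restrict {z : Fin d → ℝ | (1:ℝ) ≤ ‖z‖}) := by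
      constructor
      rw [Measure.restrict_apply_univ]
      exact hRadon 1 one_pos
    exact Measure.countable_meas_level_set_pos continuous_norm.measurable
  obtain ⟨R, hRmem, hRbad⟩ : ∃ R ∈ Set.Ioo (max ((m:ℝ)+1) 1) (max ((m:ℝ)+1) 1 + 1),
      R ∉ {c : ℝ | 0 < (ν.restrict {z : Fin d → ℝ | (1:ℝ) ≤ ‖z‖}) {z | ‖z‖ = c}} := by
    by_contra hcon
    push_neg at hcon
    have h1 := measure_mono (μ := volume) hcon
    rw [hsph_count.measure_zero, Real.volume_Ioo] at h1
    simp only [nonpos_iff_eq_zero, ENNReal.ofReal_eq_zero] at h1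
    linarith
  obtain ⟨hRlow, _⟩ := hRmem
  have hR1 : 1 < R := lt_of_le_of_lt (le_max_right _ _) hRlow
  have hRm : (m : ℝ) + 1 < R := lt_of_le_of_lt (le_max_left _ _) hRlow
  have hsphR : ν {z : Fin d → ℝ | ‖z‖ = R} = 0 := by
    have hsub : {z : Fin d → ℝ | ‖z‖ = R} ⊆ {z : Fin d → ℝ | (1:ℝ) ≤ ‖z‖} := by
      intro z hz
      rw [Set.mem_setOf_eq, hz]
      exact hR1.le
    have hmeas : MeasurableSet {z : Fin d → ℝ | ‖z‖ = R} :=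
      (isClosed_eq continuous_norm continuous_const).measurableSet
    have heq : (ν.restrict {z : Fin d → ℝ | (1:ℝ) ≤ ‖z‖}) {z | ‖z‖ = R}
        = ν {z | ‖z‖ = R} := by
      rw [Measure.restrict_apply hmeas, Set.inter_eq_left.2 hsub]
    rw [Set.mem_setOf_eq, heq] at hRbad
    exact le_antisymm (not_lt.1 hRbad) (zero_le)
  have hBfin : ν {z : Fin d → ℝ | R ≤ ‖z‖} ≠ ⊤ :=
    (hRadon R (by linarith)).ne
  have hBsmall : (ν {z : Fin d → ℝ | R ≤ ‖z‖}).toReal < ε / 5 := by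
    refine lt_of_le_of_lt ?_ hm
    refine ENNReal.toReal_mono
      (ne_top_of_le_ne_top (hRadon 1 one_pos).ne
        (measure_mono fun z hz => by
          have : (0:ℝ) ≤ (m:ℝ) := Nat.cast_nonneg _
          simp only [Set.mem_setOf_eq] at hz ⊢
          linarith))
      (measure_mono fun z hz => by
        simp only [Set.mem_setOf_eq] at hz ⊢
        linarith)
  have keyB : Tendsto (fun t => t * (μ {ω | X t ω ∈ {z : Fin d → ℝ | R ≤ ‖z‖}}).toReal)
      atTop (nhds (ν {z : Fin d → ℝ | R ≤ ‖z‖}).toReal) := by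
    refine hvague _ (isClosed_le continuous_const continuous_norm).measurableSet
      ⟨R, by linarith, fun z hz => hz⟩ ?_
    refine le_antisymm ?_ (zero_le)
    calc ν (frontier {z : Fin d → ℝ | R ≤ ‖z‖})
        ≤ ν {z : Fin d → ℝ | ‖z‖ = R} :=
          measure_mono fun z hz =>
            (frontier_le_subset_eq continuous_const continuous_norm hz).symm
      _ = 0 := hsphR
  -- the three convergence facts
  have T1 := keyA (u - ε') (by linarith) hnull₁
  have T2 := keyA (u + ε') (by linarith) hnull₂
  -- η for the perturbation
  obtain ⟨η, hη, hηR⟩ : ∃ η : ℝ, 0 < η ∧ (d : ℝ) * η * R < ε' := by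
    have hR0 : (0:ℝ) < R := lt_trans one_pos hR1
    have hdR : (0:ℝ) < (d : ℝ) * R + 1 := by positivity
    refine ⟨ε' / ((d : ℝ) * R + 1), div_pos hε'pos hdR, ?_⟩
    have h1 : ε' / ((d : ℝ) * R + 1) * ((d : ℝ) * R + 1) = ε' :=
      div_mul_cancel₀ _ hdR.ne'
    have h2 : (d : ℝ) * (ε' / ((d : ℝ) * R + 1)) * R
        = ε' - ε' / ((d : ℝ) * R + 1) := by linear_combination h1
    have h3 : 0 < ε' / ((d : ℝ) * R + 1) := div_pos hε'pos hdR
    linarith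
  -- eventual bounds
  have E1 := T1.eventually_lt_const hub
  have E2 := T2.eventually_const_lt hlb
  have E3 := keyB.eventually_lt_const hBsmall
  have E4 : ∀ᶠ t : ℝ in atTop, (0:ℝ) ≤ t := eventually_ge_atTop 0
  have E5 : ∀ᶠ t : ℝ in atTop, ‖θt t - θ‖ < η := by
    have h0 : Tendsto (fun t => θt t - θ) atTop (nhds (θ - θ)) :=
      hθt.sub tendsto_const_nhds
    rw [sub_self] at h0
    exact (NormedAddCommGroup.tendsto_nhds_zero.mp h0) η hη
  -- measure subadditivity helper
  have mono2 : ∀ E F G : Set Ω, E ⊆ F ∪ G →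
      (μ E).toReal ≤ (μ F).toReal + (μ G).toReal := by
    intro E F G h
    rw [← ENNReal.toReal_add (measure_ne_top μ F) (measure_ne_top μ G)]
    exact ENNReal.toReal_mono
      (ENNReal.add_ne_top.2 ⟨measure_ne_top μ F, measure_ne_top μ G⟩)
      ((measure_mono h).trans (measure_union_le F G))
  filter_upwards [E1, E2, E3, E4, E5] with t h1 h2 h3 h4 h5
  -- pointwise perturbation bound
  have hpert : ∀ ω : Ω, ‖X t ω‖ ≤ R →
      |∑ i, θt t i * X t ω i - ∑ i, θ i * X t ω i| ≤ (d : ℝ) * η * R := by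
    intro ω hω
    have hsum : ∑ i, θt t i * X t ω i - ∑ i, θ i * X t ω i
        = ∑ i, (θt t i - θ i) * X t ω i := by
      rw [← Finset.sum_sub_distrib]
      congr 1; ext i; ring
    rw [hsum]
    calc |∑ i, (θt t i - θ i) * X t ω i|
        ≤ ∑ i, |(θt t i - θ i) * X t ω i| := Finset.abs_sum_le_sum_abs _ _
      _ ≤ ∑ _i : Fin d, η * R := by
          refine Finset.sum_le_sum fun i _ => ?_
          rw [abs_mul]
          have ha : |θt t i - θ i| ≤ η := by
            have hd := norm_le_pi_norm (θt t - θ) i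
            rw [Real.norm_eq_abs, Pi.sub_apply] at hd
            exact le_of_lt (lt_of_le_of_lt hd h5)
          have hb : |X t ω i| ≤ R := by
            have := norm_le_pi_norm (X t ω) i
            rw [Real.norm_eq_abs] at this
            linarith
          have h0a : (0:ℝ) ≤ |θt t i - θ i| := abs_nonneg _
          have h0b : (0:ℝ) ≤ |X t ω i| := abs_nonneg _
          nlinarith
      _ = (d : ℝ) * η * R := by
          rw [Finset.sum_const, Finset.card_univ, Fintype.card_fin]
          simp [nsmul_eq_mul]; ring
  -- inclusion 1
  have incl1 : {ω | u ≤ ∑ i, θt t i * X t ω i}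
      ⊆ {ω | X t ω ∈ {z : Fin d → ℝ | u - ε' ≤ ∑ i, θ i * z i}}
        ∪ {ω | X t ω ∈ {z : Fin d → ℝ | R ≤ ‖z‖}} := by
    intro ω hω
    by_cases hR : R ≤ ‖X t ω‖
    · exact Or.inr hR
    · left
      push_neg at hR
      have := hpert ω hR.le
      have habs := abs_le.1 this
      simp only [Set.mem_setOf_eq] at hω ⊢
      linarith [habs.1]
  -- inclusion 2
  have incl2 : {ω | X t ω ∈ {z : Fin d → ℝ | u + ε' ≤ ∑ i, θ i * z i}}
      ⊆ {ω | u ≤ ∑ i, θt t i * X t ω i}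
        ∪ {ω | X t ω ∈ {z : Fin d → ℝ | R ≤ ‖z‖}} := by
    intro ω hω
    by_cases hR : R ≤ ‖X t ω‖
    · exact Or.inr hR
    · left
      push_neg at hR
      have := hpert ω hR.le
      have habs := abs_le.1 this
      simp only [Set.mem_setOf_eq] at hω ⊢
      linarith [habs.2]
  -- combine
  have hup' : t * (μ {ω | u ≤ ∑ i, θt t i * X t ω i}).toReal
      ≤ t * (μ {ω | X t ω ∈ {z : Fin d → ℝ | u - ε' ≤ ∑ i, θ i * z i}}).toReal
        + t * (μ {ω | X t ω ∈ {z : Fin d → ℝ | R ≤ ‖z‖}}).toReal := by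
    rw [← mul_add]
    exact mul_le_mul_of_nonneg_left (mono2 _ _ _ incl1) h4
  have hlo' : t * (μ {ω | X t ω ∈ {z : Fin d → ℝ | u + ε' ≤ ∑ i, θ i * z i}}).toReal
      ≤ t * (μ {ω | u ≤ ∑ i, θt t i * X t ω i}).toReal
        + t * (μ {ω | X t ω ∈ {z : Fin d → ℝ | R ≤ ‖z‖}}).toReal := by
    rw [← mul_add]
    exact mul_le_mul_of_nonneg_left (mono2 _ _ _ incl2) h4
  simp only [Set.mem_setOf_eq] at h1 h2 h3 hup' hlo' ⊢
  rw [Real.dist_eq, abs_lt]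
  constructor
  · linarith
  · linarith
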